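/- Let k > 0 and let λ1, λ2 be reals with 1/√2 ≤ λ1 ≤ λ2 and λ2 > 1. Define M(x) = √((2k + (λ2−λ1)x²)/(2λ2)) + √(2kλ2 − λ1(λ2−λ1)x²) for x ∈ [−√(2k/λ1), √(2k/λ1)]. Then for every x in this interval, M(x) ≤ M(0) = √(k/λ2) + √(2kλ2). -/

import Mathlib

/-!
STATEMENT 14: Let `k > 0` and `1/√2 ≤ λ1 ≤ λ2` with `λ2 > 1`.  Define
`M(x) = √((2k + (λ2−λ1)x²)/(2λ2)) + √(2kλ2 − λ1(λ2−λ1)x²)` for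
`x ∈ [−√(2k/λ1), √(2k/λ1)]`.  Then for every `x` in this interval,
`M(x) ≤ M(0) = √(k/λ2) + √(2kλ2)`.
-/

set_option maxHeartbeats 1000000 in
theorem M_max_at_zero (k l1 l2 : ℝ) (hk : 0 < k)
    (h1 : 1 / Real.sqrt 2 ≤ l1) (h12 : l1 ≤ l2) (h2 : 1 < l2) :
    (∀ x ∈ Set.Icc (-Real.sqrt (2 * k / l1)) (Real.sqrt (2 * k / l1)),
        Real.sqrt ((2 * k + (l2 - l1) * x ^ 2) / (2 * l2)) +
            Real.sqrt (2 * k * l2 - l1 * (l2 - l1) * x ^ 2) ≤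
          Real.sqrt ((2 * k + (l2 - l1) * (0 : ℝ) ^ 2) / (2 * l2)) +
            Real.sqrt (2 * k * l2 - l1 * (l2 - l1) * (0 : ℝ) ^ 2)) ∧
    Real.sqrt ((2 * k + (l2 - l1) * (0 : ℝ) ^ 2) / (2 * l2)) +
        Real.sqrt (2 * k * l2 - l1 * (l2 - l1) * (0 : ℝ) ^ 2) =
      Real.sqrt (k / l2) + Real.sqrt (2 * k * l2) := by
  have hs2 : (0:ℝ) < Real.sqrt 2 := by positivity
  have hl1 : 0 < l1 := lt_of_lt_of_le (by positivity) h1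
  have hl2 : (0:ℝ) < l2 := by linarith
  have h1' : 1 ≤ 2 * l1 ^ 2 := by
    have h2' : Real.sqrt 2 ^ 2 = 2 := Real.sq_sqrt (by norm_num)
    have h := (div_le_iff₀ hs2).mp h1
    nlinarith
  have heq0 : (2 * k + (l2 - l1) * (0 : ℝ) ^ 2) / (2 * l2) = k / l2 := by
    ring
  have heq0' : 2 * k * l2 - l1 * (l2 - l1) * (0 : ℝ) ^ 2 = 2 * k * l2 := by
    ring
  refine ⟨?_, by rw [heq0, heq0']⟩
  intro x hx
  rw [heq0, heq0']
  have hx2 : x ^ 2 ≤ 2 * k / l1 := by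
    have h := sq_le_sq' hx.1 hx.2
    rwa [Real.sq_sqrt (by positivity)] at h
  have hx0 : 0 ≤ x ^ 2 := sq_nonneg x
  have hxl : x ^ 2 * l1 ≤ 2 * k := (le_div_iff₀ hl1).mp hx2
  set A : ℝ := (2 * k + (l2 - l1) * x ^ 2) / (2 * l2) with hAdef
  set B : ℝ := 2 * k * l2 - l1 * (l2 - l1) * x ^ 2 with hBdef
  have hA0 : (0:ℝ) ≤ k / l2 := by positivity
  have hAnn : 0 ≤ A := by
    apply div_nonneg _ (by linarith)
    nlinarith
  have hBnn : 2 * k * l1 ≤ B := by nlinarith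
  have hB0 : (0:ℝ) ≤ 2 * k * l2 := by positivity
  set a : ℝ := Real.sqrt A
  set a0 : ℝ := Real.sqrt (k / l2)
  set b : ℝ := Real.sqrt B
  set b0 : ℝ := Real.sqrt (2 * k * l2)
  have ha : a ^ 2 = A := Real.sq_sqrt hAnn
  have ha0 : a0 ^ 2 = k / l2 := Real.sq_sqrt hA0
  have hb : b ^ 2 = B := Real.sq_sqrt (by nlinarith)
  have hb0 : b0 ^ 2 = 2 * k * l2 := Real.sq_sqrt hB0
  clear_value A B
  have hann : 0 ≤ a := Real.sqrt_nonneg _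
  have ha0nn : 0 ≤ a0 := Real.sqrt_nonneg _
  have hbnn : 0 ≤ b := Real.sqrt_nonneg _
  have hb0nn : 0 ≤ b0 := Real.sqrt_nonneg _
  clear_value a a0 b b0
  -- a0 ≤ a
  have haa0 : a0 ≤ a := by
    refine (pow_le_pow_iff_left₀ ha0nn hann (by norm_num : (2:ℕ) ≠ 0)).mp ?_
    rw [ha0, ha, hAdef, div_le_div_iff₀ hl2 (by linarith)]
    nlinarith [mul_nonneg (sub_nonneg.mpr h12) hx0]
  -- b ≤ b0
  have hbb0 : b ≤ b0 := by
    refine (pow_le_pow_iff_left₀ hbnn hb0nn (by norm_num : (2:ℕ) ≠ 0)).mp ?_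
    rw [hb, hb0, hBdef]
    nlinarith [mul_nonneg (mul_nonneg hl1.le (sub_nonneg.mpr h12)) hx0]
  -- b0 ≤ 2*l1*l2*a0
  have hkey : b0 ≤ 2 * l1 * l2 * a0 := by
    have ha0' : a0 ^ 2 * l2 = k := by rw [ha0]; field_simp
    have hc : (2 * l1 * l2 * a0) ^ 2 = 4 * l1 ^ 2 * l2 * k := by
      linear_combination (4 * l1 ^ 2 * l2) * ha0'
    refine (pow_le_pow_iff_left₀ hb0nn (by positivity) (by norm_num : (2:ℕ) ≠ 0)).mp ?_
    rw [hb0, hc]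
    nlinarith [mul_nonneg (by linarith : (0:ℝ) ≤ 2 * l1 ^ 2 - 1) (mul_pos hk hl2).le]
  -- key identity: (a - a0)*(a + a0)*(2*l1*l2) = (b0 - b)*(b0 + b)
  have hiden : (a - a0) * (a + a0) * (2 * l1 * l2) = (b0 - b) * (b0 + b) := by
    have e1 : (a - a0) * (a + a0) = A - k / l2 := by linear_combination ha - ha0
    have e2 : (b0 - b) * (b0 + b) = 2 * k * l2 - B := by linear_combination hb0 - hb
    rw [e1, e2, hAdef, hBdef]
    field_simp
    ring
  -- b0 + b ≤ 2*l1*l2*(a + a0)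
  have hsum : b0 + b ≤ 2 * l1 * l2 * (a + a0) := by
    have h3 : 2 * l1 * l2 * a0 ≤ 2 * l1 * l2 * a :=
      mul_le_mul_of_nonneg_left haa0 (by positivity)
    have h4 : 2 * l1 * l2 * (a + a0) = 2 * l1 * l2 * a + 2 * l1 * l2 * a0 := by ring
    linarith
  have hb0pos : 0 < b0 := by
    have h5 : (0:ℝ) < b0 ^ 2 := by rw [hb0]; positivity
    nlinarith [h5]
  have hd1 : 0 ≤ a - a0 := sub_nonneg.mpr haa0
  have hstep : (a - a0) * (b0 + b) ≤ (b0 - b) * (b0 + b) := by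
    calc (a - a0) * (b0 + b) ≤ (a - a0) * (2 * l1 * l2 * (a + a0)) :=
          mul_le_mul_of_nonneg_left hsum hd1
      _ = (a - a0) * (a + a0) * (2 * l1 * l2) := by ring
      _ = (b0 - b) * (b0 + b) := hiden
  have hb0b : (0:ℝ) < b0 + b := by linarith
  have hfin := (mul_le_mul_iff_of_pos_right hb0b).mp hstep
  linarith
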